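/- arXiv:1010.1278 — 3 statements merged into one kernel-verified Lean document; each statement's English description precedes it below -/
import Mathlib

section
/- Let R be a commutative noetherian local ring with maximal ideal m. Let A and L be R-modules such that A is artinian and m^n·Γ_m(L) = 0 for some integer n ≥ 1, where Γ_m(L) = {x ∈ L : m^j x = 0 for some j}. Fix an index t ≥ 0 such that m^t A = m^{t+1} A, and let s be an integer with s ≥ min(n, t). Then len_R(Hom_R(A, L)) ≤ β^R_0(A) · len_R(0 :_L m^s), where β^R_0(A) = len_R(A ⊗_R k) = dim_k(A/mA), (0 :_L m^s) = {x ∈ L : m^s x = 0}, and we use the convention 0·∞ = 0. -/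
/-!
Common definitions: `Ext`/`Tor` as objects of `ModuleCat R`, mini-max modules,
injective hulls of the residue field, Matlis biduality, module length, and the
`m`-adic completion of a local ring.
-/

open CategoryTheory IsLocalRing TensorProduct

universe u

/-- `Ext^i_R(A, B)`, as an object of `ModuleCat R` (Mathlib's derived-functor `Ext`). -/
noncomputable def extMod (R : Type u) [CommRing R] (i : ℕ) (A B : Type u)
    [AddCommGroup A] [Module R A] [AddCommGroup B] [Module R B] : ModuleCat.{u} R :=
  ((Ext R (ModuleCat.{u} R) i).obj (Opposite.op (ModuleCat.of R A))).obj (ModuleCat.of R B)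

/-- `Tor_i^R(A, B)`, as an object of `ModuleCat R`. -/
noncomputable def torMod (R : Type u) [CommRing R] (i : ℕ) (A B : Type u)
    [AddCommGroup A] [Module R A] [AddCommGroup B] [Module R B] : ModuleCat.{u} R :=
  ((Tor (ModuleCat.{u} R) i).obj (ModuleCat.of R A)).obj (ModuleCat.of R B)

/-- An `R`-module `M` is mini-max if it has a noetherian submodule `N` such that `M/N`
is artinian. -/
def IsMiniMax (R M : Type u) [CommRing R] [AddCommGroup M] [Module R M] : Prop :=
  ∃ N : Submodule R M, IsNoetherian R N ∧ IsArtinian R (M ⧸ N)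

/-- `E` is an injective hull of the residue field `k` of the local ring `R`:
`E` is injective and is an essential extension of `k`. -/
def IsInjectiveHullOfResidueField (R E : Type u) [CommRing R] [IsLocalRing R]
    [AddCommGroup E] [Module R E] : Prop :=
  Module.Injective R E ∧
    ∃ f : ResidueField R →ₗ[R] E, Function.Injective f ∧
      ∀ S : Submodule R E, S ≠ ⊥ → S ⊓ LinearMap.range f ≠ ⊥

/-- The Matlis biduality map `M → Hom_R(Hom_R(M, E), E)`, `x ↦ (ψ ↦ ψ x)`. -/
def matlisBidual (R M E : Type u) [CommRing R] [AddCommGroup M] [Module R M]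
    [AddCommGroup E] [Module R E] : M →ₗ[R] ((M →ₗ[R] E) →ₗ[R] E) :=
  LinearMap.applyₗ

/-- `M` is Matlis reflexive (with respect to `E`): the biduality map is an isomorphism. -/
def IsMatlisReflexive (R M E : Type u) [CommRing R] [AddCommGroup M] [Module R M]
    [AddCommGroup E] [Module R E] : Prop :=
  Function.Bijective (matlisBidual R M E)

/-- The length of an `R`-module `M`, valued in `ℕ∞`: the supremum of the lengths of
chains of submodules of `M`. -/
noncomputable def moduleLength (R M : Type u) [Semiring R] [AddCommMonoid M] [Module R M] :
    ℕ∞ :=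
  WithBot.unbotD 0 (Order.krullDim (Submodule R M))

/-- `inf { i ≥ 0 | Ext^i_R(K, L) ≠ 0 }`, computed in `ℕ∞` (so it is `⊤` when all the
`Ext` modules vanish).  Taking `K = R/m` gives `depth_R(L)`; taking `K = R/a` gives
`depth_R(a; L)`. -/
noncomputable def extInf (R : Type u) [CommRing R] (K L : Type u)
    [AddCommGroup K] [Module R K] [AddCommGroup L] [Module R L] : ℕ∞ :=
  sInf {n : ℕ∞ | ∃ i : ℕ, n = i ∧ Nontrivial (extMod R i K L)}

/-- The `m`-adic completion `R̂` of the local ring `R`. -/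
abbrev Rhat (R : Type u) [CommRing R] [IsLocalRing R] : Type u :=
  AdicCompletion (maximalIdeal R) R

namespace MLAux

variable {R M N : Type u} [Ring R] [AddCommGroup M] [Module R M]
  [AddCommGroup N] [Module R N]

lemma unbot'_mono {a b : WithBot ℕ∞} (h : a ≤ b) : WithBot.unbotD 0 a ≤ WithBot.unbotD 0 b := by
  induction a using WithBot.recBotCoe with
  | bot => simp
  | coe x =>
    induction b using WithBot.recBotCoe with
    | bot => exact absurd h (WithBot.not_coe_le_bot x)
    | coe y => simpa using h

lemma length_le_of_injective (f : M →ₗ[R] N) (hf : Function.Injective f) :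
    moduleLength R M ≤ moduleLength R N := by
  exact unbot'_mono (Order.krullDim_le_of_strictMono _
    (Submodule.map_strictMono_of_injective hf))

lemma length_eq_of_equiv (e : M ≃ₗ[R] N) : moduleLength R M = moduleLength R N :=
  le_antisymm (length_le_of_injective e.toLinearMap e.injective)
    (length_le_of_injective e.symm.toLinearMap e.symm.injective)

lemma chain_length_le (p : LTSeries (Submodule R M)) :
    (p.length : ℕ∞) ≤ moduleLength R M := by
  have h2 : ((p.length : ℕ∞) : WithBot ℕ∞) ≤ Order.krullDim (Submodule R M) := by
    exact_mod_cast Order.LTSeries.length_le_krullDim p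
  simpa [moduleLength] using unbot'_mono h2

lemma length_le_of_forall_chain {c : ℕ∞}
    (h : ∀ p : LTSeries (Submodule R M), (p.length : ℕ∞) ≤ c) :
    moduleLength R M ≤ c := by
  have : Order.krullDim (Submodule R M) ≤ (c : WithBot ℕ∞) := by
    rw [Order.krullDim]
    exact iSup_le fun p => by exact_mod_cast h p
  simpa [moduleLength] using unbot'_mono this

lemma height_le_length (x : Submodule R M) :
    Order.height x ≤ moduleLength R M := by
  have h := Order.height_le_krullDim x
  have h0 : (0 : WithBot ℕ∞) ≤ Order.krullDim (Submodule R M) :=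
    Order.krullDim_nonneg
  have hnb : Order.krullDim (Submodule R M) ≠ ⊥ := by
    intro hb; rw [hb] at h0; simp at h0
  obtain ⟨y, hy⟩ := WithBot.ne_bot_iff_exists.mp hnb
  rw [moduleLength, ← hy]
  rw [← hy] at h
  exact_mod_cast h

lemma length_zero_of_subsingleton [Subsingleton M] : moduleLength R M = 0 := by
  have : Subsingleton (Submodule R M) := (Submodule.subsingleton_iff R).mpr ‹_›
  have : Unique (Submodule R M) := uniqueOfSubsingleton ⊥
  rw [moduleLength, Order.krullDim_eq_zero_of_unique]
  rfl

lemma length_ne_zero_of_nontrivial [Nontrivial M] : moduleLength R M ≠ 0 := by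
  have hbt : (⊥ : Submodule R M) < ⊤ := bot_lt_top
  have := chain_length_le (R := R) (M := M)
    ⟨1, ![⊥, ⊤], fun i => by fin_cases i; simpa using hbt⟩
  intro h0
  rw [h0] at this
  simp at this

end MLAux

namespace MLAux
variable {R M N : Type u} [Ring R] [AddCommGroup M] [Module R M]
  [AddCommGroup N] [Module R N]

lemma length_le_add_quotient (S : Submodule R M) :
    moduleLength R M ≤ moduleLength R S + moduleLength R (M ⧸ S) := by
  by_cases h1 : moduleLength R S = ⊤
  · rw [h1, top_add]; exact le_top
  by_cases h2 : moduleLength R (M ⧸ S) = ⊤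
  · rw [h2, add_top]; exact le_top
  apply length_le_of_forall_chain
  intro p
  set a : Fin (p.length + 1) → Submodule R S := fun i => (p.toFun i).comap S.subtype with ha
  set b : Fin (p.length + 1) → Submodule R (M ⧸ S) := fun i => (p.toFun i).map S.mkQ with hb
  have key : ∀ i j : Fin (p.length + 1), i ≤ j → a i = a j → b i = b j →
      p.toFun i = p.toFun j := by
    intro i j hij hab hbb
    refine le_antisymm (p.monotone hij) ?_
    intro x hx
    have hmk : S.mkQ x ∈ b i := by rw [hbb]; exact ⟨x, hx, rfl⟩
    obtain ⟨y, hy, hxy⟩ := hmk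
    have hsub : x - y ∈ S := by
      rw [← Submodule.Quotient.eq S]
      exact hxy.symm
    have hsub' : x - y ∈ p.toFun j := sub_mem hx (p.monotone hij hy)
    have : (⟨x - y, hsub⟩ : S) ∈ a i := by
      rw [hab]; exact hsub'
    have hxmy : x - y ∈ p.toFun i := this
    have := add_mem hy hxmy
    simpa using this
  have hfa : ∀ i, Order.height (a i) < ⊤ :=
    fun i => lt_of_le_of_lt (height_le_length _) (lt_top_iff_ne_top.mpr h1)
  have hfb : ∀ i, Order.height (b i) < ⊤ :=
    fun i => lt_of_le_of_lt (height_le_length _) (lt_top_iff_ne_top.mpr h2)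
  have amono : ∀ i j : Fin (p.length + 1), i ≤ j → a i ≤ a j :=
    fun i j hij => Submodule.comap_mono (p.monotone hij)
  have bmono : ∀ i j : Fin (p.length + 1), i ≤ j → b i ≤ b j :=
    fun i j hij => Submodule.map_mono (p.monotone hij)
  have claim : ∀ i : Fin (p.length + 1),
      (i.val : ℕ∞) ≤ Order.height (a i) + Order.height (b i) := by
    intro i
    induction i using Fin.induction with
    | zero => simp
    | succ i IH =>
      have hlt := p.step i
      have hne : ¬ (a i.castSucc = a i.succ ∧ b i.castSucc = b i.succ) := by
        rintro ⟨h3, h4⟩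
        exact absurd (key _ _ (Fin.castSucc_le_succ i) h3 h4) (ne_of_lt hlt)
      have hle : (i.castSucc : Fin (p.length+1)) ≤ i.succ := Fin.castSucc_le_succ i
      have step : Order.height (a i.castSucc) + Order.height (b i.castSucc) + 1 ≤
          Order.height (a i.succ) + Order.height (b i.succ) := by
        rcases not_and_or.mp hne with h3 | h3
        · have hstrict : a i.castSucc < a i.succ := lt_of_le_of_ne (amono _ _ hle) h3
          have := Order.height_strictMono hstrict (hfa _)
          calc Order.height (a i.castSucc) + Order.height (b i.castSucc) + 1
              = (Order.height (a i.castSucc) + 1) + Order.height (b i.castSucc) := by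
                rw [add_right_comm]
            _ ≤ Order.height (a i.succ) + Order.height (b i.succ) :=
                add_le_add (Order.add_one_le_of_lt this) (Order.height_mono (bmono _ _ hle))
        · have hstrict : b i.castSucc < b i.succ := lt_of_le_of_ne (bmono _ _ hle) h3
          have := Order.height_strictMono hstrict (hfb _)
          calc Order.height (a i.castSucc) + Order.height (b i.castSucc) + 1
              = Order.height (a i.castSucc) + (Order.height (b i.castSucc) + 1) := by
                rw [add_assoc]
            _ ≤ Order.height (a i.succ) + Order.height (b i.succ) :=
                add_le_add (Order.height_mono (amono _ _ hle)) (Order.add_one_le_of_lt this)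
      have : ((i.succ : Fin (p.length+1)).val : ℕ∞) = (i.castSucc.val : ℕ∞) + 1 := by
        push_cast [Fin.val_succ]
        simp
      rw [this]
      exact le_trans (add_le_add IH (le_refl 1)) step
  have hlast := claim (Fin.last p.length)
  simp only [Fin.val_last] at hlast
  exact le_trans hlast (add_le_add (height_le_length _) (height_le_length _))

end MLAux

namespace MLAux
variable {R M N : Type u} [Ring R] [AddCommGroup M] [Module R M]
  [AddCommGroup N] [Module R N]

lemma length_prod_le :
    moduleLength R (M × N) ≤ moduleLength R M + moduleLength R N := by
  have h := length_le_add_quotient (R := R) (Submodule.fst R M N)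
  have hker : LinearMap.ker (LinearMap.snd R M N) = Submodule.fst R M N := rfl
  have e2 : ((M × N) ⧸ Submodule.fst R M N) ≃ₗ[R] N :=
    (Submodule.quotEquivOfEq _ _ hker.symm).trans
      ((LinearMap.snd R M N).quotKerEquivOfSurjective (fun z => ⟨(0, z), rfl⟩))
  rw [length_eq_of_equiv (Submodule.fstEquiv R M N), length_eq_of_equiv e2] at h
  exact h

lemma length_pi_fin_le (c : ℕ) :
    moduleLength R (Fin c → M) ≤ (c : ℕ∞) * moduleLength R M := by
  induction c with
  | zero =>
    have : Subsingleton (Fin 0 → M) := by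
      constructor; intro f g; funext i; exact i.elim0
    rw [length_zero_of_subsingleton]
    simp
  | succ c IH =>
    have e : (Fin (c + 1) → M) ≃ₗ[R] M × (Fin c → M) :=
      { (Fin.consEquiv (fun _ => M)).symm with
        map_add' := fun f g => rfl
        map_smul' := fun r f => rfl }
    rw [length_eq_of_equiv e]
    calc moduleLength R (M × (Fin c → M))
        ≤ moduleLength R M + moduleLength R (Fin c → M) := length_prod_le
      _ ≤ moduleLength R M + (c : ℕ∞) * moduleLength R M := add_le_add le_rfl IH
      _ = ((c : ℕ) + 1 : ℕ∞) * moduleLength R M := by ring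
      _ = ((c + 1 : ℕ) : ℕ∞) * moduleLength R M := by push_cast; ring

end MLAux

namespace MLAux

lemma exists_span_of_length_le (R : Type u) [Ring R] :
    ∀ (c : ℕ) (M : Type u) [AddCommGroup M] [Module R M],
      moduleLength R M ≤ (c : ℕ∞) →
        ∃ v : Fin c → M, Submodule.span R (Set.range v) = ⊤ := by
  intro c
  induction c with
  | zero =>
    intro M _ _ h
    have hsub : Subsingleton M := by
      by_contra hns
      have : Nontrivial M := not_subsingleton_iff_nontrivial.mp hns
      exact length_ne_zero_of_nontrivial (le_antisymm (by simpa using h) zero_le)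
    have : Subsingleton (Submodule R M) := (Submodule.subsingleton_iff R).mpr hsub
    exact ⟨fun i => i.elim0, Subsingleton.elim _ _⟩
  | succ c IH =>
    intro M _ _ h
    by_cases hsub : Subsingleton M
    · have : Subsingleton (Submodule R M) := (Submodule.subsingleton_iff R).mpr hsub
      exact ⟨fun _ => 0, Subsingleton.elim _ _⟩
    have hnt : Nontrivial M := not_subsingleton_iff_nontrivial.mp hsub
    obtain ⟨x, hx⟩ := exists_ne (0 : M)
    set S := Submodule.span R {x} with hS
    have hSbot : (⊥ : Submodule R M) < S := by
      rw [bot_lt_iff_ne_bot, hS, Ne, Submodule.span_singleton_eq_bot]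
      exact hx
    have hq : moduleLength R (M ⧸ S) ≤ (c : ℕ∞) := by
      apply length_le_of_forall_chain
      intro p
      have hmap := p.map (Submodule.comap S.mkQ)
        (Submodule.comap_strictMono_of_surjective S.mkQ_surjective)
      have hhead : (⊥ : Submodule R M) <
          (p.map (Submodule.comap S.mkQ)
            (Submodule.comap_strictMono_of_surjective S.mkQ_surjective)).head := by
        refine lt_of_lt_of_le hSbot ?_
        have h1 : S = Submodule.comap S.mkQ ⊥ := by
          rw [Submodule.comap_bot, Submodule.ker_mkQ]
        show S ≤ Submodule.comap S.mkQ p.head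
        exact le_trans (le_of_eq h1) (Submodule.comap_mono bot_le)
      have hchain := chain_length_le (R := R) (M := M)
        (((p.map (Submodule.comap S.mkQ)
          (Submodule.comap_strictMono_of_surjective S.mkQ_surjective))).cons ⊥ hhead)
      rw [RelSeries.cons_length] at hchain
      have hmlen : (p.map (Submodule.comap S.mkQ)
          (Submodule.comap_strictMono_of_surjective S.mkQ_surjective)).length = p.length := rfl
      rw [hmlen] at hchain
      have hle : ((p.length + 1 : ℕ) : ℕ∞) ≤ ((c + 1 : ℕ) : ℕ∞) := by
        exact_mod_cast le_trans hchain h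
      have : p.length + 1 ≤ c + 1 := by exact_mod_cast hle
      exact_mod_cast Nat.le_of_succ_le_succ this
    obtain ⟨w, hw⟩ := IH (M ⧸ S) hq
    have hlift : ∀ i : Fin c, ∃ y : M, S.mkQ y = w i := fun i => S.mkQ_surjective (w i)
    choose v' hv' using hlift
    refine ⟨Fin.cons x v', ?_⟩
    set v : Fin (c + 1) → M := Fin.cons x v' with hv
    have hmap : Submodule.map S.mkQ (Submodule.span R (Set.range v)) = ⊤ := by
      rw [Submodule.map_span]
      rw [eq_top_iff, ← hw]
      apply Submodule.span_mono
      rintro _ ⟨i, rfl⟩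
      exact ⟨v i.succ, ⟨i.succ, rfl⟩, by rw [hv, Fin.cons_succ, hv']⟩
    have hsup := (Submodule.map_mkQ_eq_top S _).mp hmap
    have hSle : S ≤ Submodule.span R (Set.range v) := by
      rw [hS]
      apply Submodule.span_mono
      intro y hy
      rw [Set.mem_singleton_iff] at hy
      exact ⟨0, by rw [hv, Fin.cons_zero, hy]⟩
    rw [sup_eq_right.mpr hSle] at hsup
    exact hsup

end MLAux



namespace MLAux

lemma span_sup_pow_smul_eq_top {R M : Type u} [CommRing R] [AddCommGroup M] [Module R M]
    (I : Ideal R) (S : Submodule R M) (h : S ⊔ I • (⊤ : Submodule R M) = ⊤) :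
    ∀ k : ℕ, S ⊔ I ^ k • (⊤ : Submodule R M) = ⊤ := by
  intro k
  induction k with
  | zero =>
    rw [pow_zero, Ideal.one_eq_top, Submodule.top_smul]
    exact sup_top_eq _
  | succ k IH =>
    have h1 : I ^ k • (⊤ : Submodule R M) =
        I ^ k • S ⊔ I ^ (k + 1) • (⊤ : Submodule R M) := by
      conv_lhs => rw [← h]
      rw [Submodule.smul_sup, pow_succ, ← smul_eq_mul, Submodule.smul_assoc]
    have h2 : I ^ k • (⊤ : Submodule R M) ≤ S ⊔ I ^ (k + 1) • (⊤ : Submodule R M) := by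
      rw [h1]
      apply sup_le
      · exact le_trans Submodule.smul_le_right le_sup_left
      · exact le_sup_right
    rw [eq_top_iff]
    exact le_trans (le_of_eq IH.symm) (sup_le le_sup_left h2)

end MLAux

set_option maxHeartbeats 1000000

/-- Let `R` be a commutative noetherian local ring with maximal ideal `m`, let `A` be an
artinian `R`-module and `L` an `R`-module with `m^n · Γ_m(L) = 0` for some `n ≥ 1`,
where `Γ_m(L) = { x ∈ L | m^j x = 0 for some j }`.  Fix `t` with `m^t A = m^(t+1) A` and
`s ≥ min n t`.  Then `len_R(Hom_R(A, L)) ≤ β^R_0(A) · len_R(0 :_L m^s)`, where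
`β^R_0(A) = len_R(A ⊗_R k)` (with the convention `0 · ∞ = 0`, valid in `ℕ∞`). -/
theorem length_hom_le_betti_mul_length_torsion
    (R : Type u) [CommRing R] [IsNoetherianRing R] [IsLocalRing R]
    (A L : Type u) [AddCommGroup A] [Module R A] [AddCommGroup L] [Module R L]
    [IsArtinian R A]
    (n : ℕ) (hn : 1 ≤ n)
    (hΓ : (maximalIdeal R ^ n) •
      (⨆ j : ℕ, Submodule.torsionBySet R L ((maximalIdeal R ^ j : Ideal R) : Set R)) =
        (⊥ : Submodule R L))
    (t : ℕ) (ht : maximalIdeal R ^ t • (⊤ : Submodule R A) =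
      maximalIdeal R ^ (t + 1) • (⊤ : Submodule R A))
    (s : ℕ) (hs : min n t ≤ s) :
    moduleLength R (A →ₗ[R] L) ≤
      moduleLength R (A ⊗[R] ResidueField R) *
        moduleLength R (Submodule.torsionBySet R L ((maximalIdeal R ^ s : Ideal R) : Set R)) := by
  classical
  open MLAux in
  set I := maximalIdeal R with hIdef
  set Γ := (⨆ j : ℕ, Submodule.torsionBySet R L ((I ^ j : Ideal R) : Set R)) with hGdef
  set Ms := Submodule.torsionBySet R L ((I ^ s : Ideal R) : Set R) with hMsdef
  -- every element of `A` is killed by a power of `I`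
  have hA : ∀ a : A, ∃ j : ℕ, ∀ c ∈ I ^ j, c • a = (0 : A) := by
    intro a
    set N := Submodule.span R {a} with hN
    have hNfg : N.FG := Submodule.fg_span_singleton a
    have hNnoeth : IsNoetherian R N := isNoetherian_of_fg_of_noetherian N hNfg
    obtain ⟨j, hj⟩ := IsArtinian.monotone_stabilizes (R := R) (M := A)
      ⟨fun j => OrderDual.toDual (I ^ j • N), fun j1 j2 h12 =>
        Submodule.smul_mono_left (Ideal.pow_le_pow_right h12)⟩
    have hjeq : I ^ j • N = I ^ (j + 1) • N := hj (j + 1) (Nat.le_succ j)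
    have hstep : I ^ (j + 1) • N = I • (I ^ j • N) := by
      rw [pow_succ', ← smul_eq_mul, Submodule.smul_assoc]
    have hWfg : (I ^ j • N).FG :=
      isNoetherian_submodule.mp hNnoeth _ Submodule.smul_le_right
    have hjac : I ≤ (⊥ : Ideal R).jacobson :=
      le_of_eq (IsLocalRing.jacobson_eq_maximalIdeal ⊥ bot_ne_top).symm
    have hW : I ^ j • N = ⊥ :=
      Submodule.eq_bot_of_le_smul_of_le_jacobson_bot I _ hWfg
        (le_of_le_of_eq (le_of_eq hjeq) hstep) hjac
    refine ⟨j, fun c hc => ?_⟩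
    have : c • a ∈ I ^ j • N :=
      Submodule.smul_mem_smul hc (Submodule.mem_span_singleton_self a)
    rw [hW] at this
    simpa using this
  have hGmem : ∀ (φ : A →ₗ[R] L) (x : A), φ x ∈ Γ := by
    intro φ x
    obtain ⟨j, hj⟩ := hA x
    refine Submodule.mem_iSup_of_mem j ?_
    rw [Submodule.mem_torsionBySet_iff]
    rintro ⟨c, hc⟩
    show c • φ x = 0
    rw [← map_smul, hj c hc, map_zero]
  have hn0 : ∀ (φ : A →ₗ[R] L) (x : A), ∀ c ∈ I ^ n, c • φ x = 0 := by
    intro φ x c hc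
    have h1 : c • φ x ∈ I ^ n • Γ := Submodule.smul_mem_smul hc (hGmem φ x)
    rw [hΓ] at h1
    simpa using h1
  have hstabA : ∀ k : ℕ, I ^ (t + k) • (⊤ : Submodule R A) = I ^ t • ⊤ := by
    intro k
    induction k with
    | zero => rfl
    | succ k IH =>
      have e1 : t + (k + 1) = k + (t + 1) := by omega
      have e2 : k + t = t + k := by omega
      rw [e1, pow_add, ← smul_eq_mul, Submodule.smul_assoc, ← ht, ← Submodule.smul_assoc,
        smul_eq_mul, ← pow_add, e2, IH]
  have hrangeM : ∀ (φ : A →ₗ[R] L) (x : A), φ x ∈ Ms := by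
    intro φ x
    rw [hMsdef, Submodule.mem_torsionBySet_iff]
    rintro ⟨c, hc⟩
    show c • φ x = 0
    rcases min_le_iff.mp hs with hns | hts
    · exact hn0 φ x c (Ideal.pow_le_pow_right hns hc)
    · have h1 : c • x ∈ I ^ s • (⊤ : Submodule R A) :=
        Submodule.smul_mem_smul hc trivial
      have h2 : I ^ s • (⊤ : Submodule R A) = I ^ (s + n) • ⊤ := by
        have e1 := hstabA (s - t)
        have e2 := hstabA (s - t + n)
        rw [show t + (s - t) = s by omega] at e1
        rw [show t + (s - t + n) = s + n by omega] at e2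
        rw [e1, e2]
      have h3 : I ^ (s + n) • (⊤ : Submodule R A) = I ^ n • (I ^ s • ⊤) := by
        rw [← Submodule.smul_assoc, smul_eq_mul, ← pow_add, Nat.add_comm n s]
      rw [h2, h3] at h1
      have h4 : φ (c • x) ∈ Submodule.map φ (I ^ n • (I ^ s • (⊤ : Submodule R A))) :=
        Submodule.mem_map_of_mem h1
      rw [Submodule.map_smul''] at h4
      have h5 : Submodule.map φ (I ^ s • (⊤ : Submodule R A)) ≤ Γ := by
        rintro _ ⟨y, -, rfl⟩
        exact hGmem φ y
      have h6 := smul_mono_right _ h5 h4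
      rw [hΓ] at h6
      rw [← map_smul]
      simpa using h6
  -- the comparison iso between `A ⊗ k` and `A ⧸ I•⊤`
  have e : (A ⊗[R] ResidueField R) ≃ₗ[R] (A ⧸ (I • (⊤ : Submodule R A))) :=
    TensorProduct.tensorQuotEquivQuotSMul A I
  by_cases hb0 : Subsingleton (A ⊗[R] ResidueField R)
  · have hQsub : Subsingleton (A ⧸ (I • (⊤ : Submodule R A))) := Equiv.subsingleton e.symm.toEquiv
    have hItop : I • (⊤ : Submodule R A) = ⊤ :=
      Submodule.Quotient.subsingleton_iff.mp hQsub
    have hpow : ∀ k : ℕ, I ^ (k + 1) • (⊤ : Submodule R A) = ⊤ := by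
      intro k
      induction k with
      | zero => rw [pow_one, hItop]
      | succ k IH => rw [pow_succ', ← smul_eq_mul, Submodule.smul_assoc, IH, hItop]
    have hzero : ∀ φ : A →ₗ[R] L, φ = 0 := by
      intro φ
      ext x
      have hx : x ∈ I ^ n • (⊤ : Submodule R A) := by
        rw [show n = (n - 1) + 1 by omega, hpow]
        trivial
      have h4 : φ x ∈ Submodule.map φ (I ^ n • (⊤ : Submodule R A)) :=
        Submodule.mem_map_of_mem hx
      rw [Submodule.map_smul''] at h4
      have h5 : Submodule.map φ (⊤ : Submodule R A) ≤ Γ := by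
        rintro _ ⟨y, -, rfl⟩
        exact hGmem φ y
      have h6 := smul_mono_right _ h5 h4
      rw [hΓ] at h6
      simpa using h6
    have : Subsingleton (A →ₗ[R] L) := ⟨fun f g => by rw [hzero f, hzero g]⟩
    rw [MLAux.length_zero_of_subsingleton]
    exact zero_le
  have hbnt : Nontrivial (A ⊗[R] ResidueField R) := not_subsingleton_iff_nontrivial.mp hb0
  by_cases hM0 : Subsingleton Ms
  · have hMb : Ms = ⊥ := by
      rw [eq_bot_iff]
      intro z hz
      simpa using Subsingleton.elim (⟨z, hz⟩ : Ms) ⟨0, Submodule.zero_mem Ms⟩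
    have hzero : ∀ φ : A →ₗ[R] L, φ = 0 := by
      intro φ
      ext x
      have := hrangeM φ x
      rw [hMb] at this
      simpa using this
    have : Subsingleton (A →ₗ[R] L) := ⟨fun f g => by rw [hzero f, hzero g]⟩
    rw [MLAux.length_zero_of_subsingleton]
    exact zero_le
  have hMnt : Nontrivial Ms := not_subsingleton_iff_nontrivial.mp hM0
  by_cases hMtop : moduleLength R Ms = ⊤
  · rw [hMtop, ENat.mul_top (MLAux.length_ne_zero_of_nontrivial (R := R)
      (M := A ⊗[R] ResidueField R))]
    exact le_top
  by_cases hbtop : moduleLength R (A ⊗[R] ResidueField R) = ⊤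
  · rw [hbtop, ENat.top_mul (MLAux.length_ne_zero_of_nontrivial (R := R) (M := Ms))]
    exact le_top
  obtain ⟨c, hc0⟩ := WithTop.ne_top_iff_exists.mp hbtop
  have hc : (c : ℕ∞) = moduleLength R (A ⊗[R] ResidueField R) := by exact_mod_cast hc0
  have hQlen : moduleLength R (A ⧸ (I • (⊤ : Submodule R A))) ≤ (c : ℕ∞) := by
    rw [← MLAux.length_eq_of_equiv e, ← hc]
  obtain ⟨w, hw⟩ := MLAux.exists_span_of_length_le R c _ hQlen
  have hsurj := Submodule.mkQ_surjective (I • (⊤ : Submodule R A))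
  choose av hav using fun i => hsurj (w i)
  have hgen1 : Submodule.span R (Set.range av) ⊔ I • (⊤ : Submodule R A) = ⊤ := by
    rw [sup_comm, ← Submodule.map_mkQ_eq_top]
    rw [Submodule.map_span, eq_top_iff, ← hw]
    apply Submodule.span_mono
    rintro _ ⟨i, rfl⟩
    exact ⟨av i, ⟨i, rfl⟩, hav i⟩
  have hgenpow : ∀ k : ℕ, Submodule.span R (Set.range av) ⊔ I ^ k • (⊤ : Submodule R A) = ⊤ :=
    MLAux.span_sup_pow_smul_eq_top I _ hgen1
  -- the evaluation map
  let E : (A →ₗ[R] L) →ₗ[R] (Fin c → Ms) :=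
    LinearMap.pi (fun i => LinearMap.codRestrict Ms (LinearMap.applyₗ (av i))
      (fun φ => hrangeM φ (av i)))
  have hEinj : Function.Injective E := by
    rw [← LinearMap.ker_eq_bot, eq_bot_iff]
    intro φ hφ
    have hφ0 : ∀ i, φ (av i) = 0 := by
      intro i
      have h0 : E φ = 0 := hφ
      have h1 := congrFun h0 i
      exact congrArg Subtype.val h1
    have hzero : φ = 0 := by
      ext x
      have hx : x ∈ Submodule.span R (Set.range av) ⊔ I ^ s • (⊤ : Submodule R A) := by
        rw [hgenpow s]; trivial
      obtain ⟨y, hy, z, hz, rfl⟩ := Submodule.mem_sup.mp hx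
      have hy0 : φ y = 0 := by
        have : Submodule.span R (Set.range av) ≤ LinearMap.ker φ := by
          rw [Submodule.span_le]
          rintro _ ⟨i, rfl⟩
          exact hφ0 i
        exact this hy
      have hz0 : φ z = 0 := by
        have h4 : φ z ∈ Submodule.map φ (I ^ s • (⊤ : Submodule R A)) :=
          Submodule.mem_map_of_mem hz
        rw [Submodule.map_smul''] at h4
        have h5 : I ^ s • Submodule.map φ (⊤ : Submodule R A) ≤ (⊥ : Submodule R L) := by
          rw [Submodule.smul_le]
          rintro r hr _ ⟨u, -, rfl⟩
          have := hrangeM φ u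
          rw [hMsdef, Submodule.mem_torsionBySet_iff] at this
          exact this ⟨r, hr⟩
        simpa using h5 h4
      simp [hy0, hz0]
    simp [hzero]
  calc moduleLength R (A →ₗ[R] L) ≤ moduleLength R (Fin c → Ms) :=
        MLAux.length_le_of_injective E hEinj
    _ ≤ (c : ℕ∞) * moduleLength R Ms := MLAux.length_pi_fin_le c
    _ = moduleLength R (A ⊗[R] ResidueField R) * moduleLength R Ms := by rw [hc]
end

section
/- Let R be a commutative noetherian local ring with maximal ideal m. Let A be an artinian R-module and let L be an m-torsion R-module (every element of L is annihilated by some power of m). Fix an integer t ≥ 0 such that m^t A = m^{t+1} A. Then len_R(A ⊗_R L) ≤ len_R(A/m^t A) · β^R_0(L) and len_R(A ⊗_R L) ≤ β^R_0(A) · len_R(L/m^t L), with the convention 0·∞ = 0. -/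
/-!
Common definitions: `Ext`/`Tor` as objects of `ModuleCat R`, mini-max modules,
injective hulls of the residue field, Matlis biduality, module length, and the
`m`-adic completion of a local ring.
-/

open CategoryTheory IsLocalRing TensorProduct

universe u

/-! ### Auxiliary length infrastructure -/

section LengthInfra

lemma moduleLength_eq_iSup (R M : Type u) [Semiring R] [AddCommMonoid M] [Module R M] :
    moduleLength R M = ⨆ (p : LTSeries (Submodule R M)), (p.length : ℕ∞) := by
  rw [moduleLength, Order.krullDim_eq_iSup_length, WithBot.unbotD_coe]

lemma length_le_moduleLength {R M : Type u} [Semiring R] [AddCommMonoid M] [Module R M]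
    (p : LTSeries (Submodule R M)) : (p.length : ℕ∞) ≤ moduleLength R M := by
  rw [moduleLength_eq_iSup]
  exact le_iSup (fun q : LTSeries (Submodule R M) => (q.length : ℕ∞)) p

lemma moduleLength_le_of_strictMono {R M R' M' : Type u} [Semiring R] [AddCommMonoid M]
    [Module R M] [Semiring R'] [AddCommMonoid M'] [Module R' M']
    (f : Submodule R M → Submodule R' M') (hf : StrictMono f) :
    moduleLength R M ≤ moduleLength R' M' := by
  rw [moduleLength_eq_iSup R M]
  exact iSup_le fun p => length_le_moduleLength (p.map f hf)

lemma moduleLength_le_of_injective {R M M' : Type u} [Ring R] [AddCommGroup M] [Module R M]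
    [AddCommGroup M'] [Module R M'] (f : M →ₗ[R] M') (hf : Function.Injective f) :
    moduleLength R M ≤ moduleLength R M' :=
  moduleLength_le_of_strictMono (Submodule.map f) (Submodule.map_strictMono_of_injective hf)

lemma moduleLength_le_of_surjective {R M M' : Type u} [Ring R] [AddCommGroup M] [Module R M]
    [AddCommGroup M'] [Module R M'] (f : M →ₗ[R] M') (hf : Function.Surjective f) :
    moduleLength R M' ≤ moduleLength R M :=
  moduleLength_le_of_strictMono (Submodule.comap f) (Submodule.comap_strictMono_of_surjective hf)

lemma moduleLength_eq_of_equiv {R M M' : Type u} [Ring R] [AddCommGroup M] [Module R M]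
    [AddCommGroup M'] [Module R M'] (e : M ≃ₗ[R] M') :
    moduleLength R M = moduleLength R M' :=
  le_antisymm (moduleLength_le_of_injective e.toLinearMap e.injective)
    (moduleLength_le_of_surjective e.toLinearMap e.surjective)

lemma moduleLength_eq_zero_of_subsingleton {R M : Type u} [Ring R] [AddCommGroup M]
    [Module R M] [Subsingleton M] : moduleLength R M = 0 := by
  have hs : Subsingleton (Submodule R M) := Submodule.subsingleton_iff R |>.mpr ‹_›
  rw [moduleLength_eq_iSup]
  refine le_antisymm (iSup_le fun p => ?_) zero_le
  rcases Nat.eq_zero_or_pos p.length with h | h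
  · simp [h]
  · exact absurd (Subsingleton.elim (p ⟨0, by omega⟩) (p ⟨1, by omega⟩))
      (p.strictMono (by simp [Fin.lt_def])).ne

lemma subsingleton_of_moduleLength_le_zero {R M : Type u} [Ring R] [AddCommGroup M]
    [Module R M] (h : moduleLength R M ≤ 0) : Subsingleton M := by
  by_contra hns
  have : Nontrivial M := not_subsingleton_iff_nontrivial.mp hns
  have hne : (⊥ : Submodule R M) ≠ ⊤ := by
    obtain ⟨x, hx⟩ := exists_ne (0 : M)
    intro hbt
    have hxb : x ∈ (⊥ : Submodule R M) := by rw [hbt]; trivial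
    exact hx (by simpa using hxb)
  have hlt : (⊥ : Submodule R M) < ⊤ := hne.lt_top
  have := length_le_moduleLength ((RelSeries.singleton _ (⊤ : Submodule R M)).cons ⊥ hlt)
  simp only [RelSeries.cons_length, RelSeries.singleton_length] at this
  have h1 : (1 : ℕ∞) ≤ 0 := le_trans (by exact_mod_cast this) h
  simp at h1

lemma height_le_moduleLength {R M : Type u} [Ring R] [AddCommGroup M] [Module R M]
    (S : Submodule R M) : Order.height S ≤ moduleLength R M := by
  have h1 := Order.height_le_krullDim S
  have h2 : Order.krullDim (Submodule R M) = ((moduleLength R M : ℕ∞) : WithBot ℕ∞) := by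
    rw [moduleLength_eq_iSup, Order.krullDim_eq_iSup_length]
  rw [h2] at h1
  exact_mod_cast h1

lemma LTSeries.length_le_fun {γ : Type u} [Preorder γ] (f : γ → ℕ∞)
    (hf : ∀ x y : γ, x < y → f x + 1 ≤ f y) (p : LTSeries γ) :
    (p.length : ℕ∞) ≤ f p.last := by
  have key : ∀ i : Fin (p.length + 1), ((i : ℕ) : ℕ∞) ≤ f (p i) := by
    intro i
    induction i using Fin.induction with
    | zero => simp
    | succ i ih =>
        have hstep := hf _ _ (p.strictMono (show i.castSucc < i.succ from Fin.castSucc_lt_succ))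
        calc ((i.succ : ℕ) : ℕ∞) = ((i : ℕ) : ℕ∞) + 1 := by rfl
          _ ≤ f (p i.castSucc) + 1 := add_le_add_left ih 1
          _ ≤ f (p i.succ) := hstep
  exact key (Fin.last _)

lemma moduleLength_le_add {R M : Type u} [Ring R] [AddCommGroup M] [Module R M]
    (P : Submodule R M) :
    moduleLength R M ≤ moduleLength R P + moduleLength R (M ⧸ P) := by
  classical
  set f : Submodule R M → ℕ∞ := fun S =>
    Order.height (S.comap P.subtype) + Order.height (S.map P.mkQ) with hfdef
  have hstep : ∀ S T : Submodule R M, S < T → f S + 1 ≤ f T := by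
    intro S T hST
    have hc : S.comap P.subtype ≤ T.comap P.subtype := Submodule.comap_mono hST.le
    have hm : S.map P.mkQ ≤ T.map P.mkQ := Submodule.map_mono hST.le
    have key : S.comap P.subtype < T.comap P.subtype ∨ S.map P.mkQ < T.map P.mkQ := by
      rcases hc.lt_or_eq with h | h
      · exact Or.inl h
      rcases hm.lt_or_eq with h' | h'
      · exact Or.inr h'
      exfalso
      apply hST.ne
      refine le_antisymm hST.le fun t ht => ?_
      have ht' : P.mkQ t ∈ S.map P.mkQ := h' ▸ Submodule.mem_map_of_mem ht
      obtain ⟨s, hs, hst⟩ := ht'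
      have hsub : s - t ∈ P := (Submodule.Quotient.eq P).mp hst
      have hsubT : (⟨s - t, hsub⟩ : P) ∈ T.comap P.subtype := by
        simpa using T.sub_mem (hST.le hs) ht
      rw [← h] at hsubT
      have hsS : s - t ∈ S := hsubT
      have := S.sub_mem hs hsS
      simpa using this
    rcases key with h | h
    · by_cases htop : Order.height (S.comap P.subtype) = ⊤
      · have hT : Order.height (T.comap P.subtype) = ⊤ :=
          top_unique (htop ▸ Order.height_mono hc)
        simp [hfdef, hT, top_add]
      · have h1 : Order.height (S.comap P.subtype) + 1 ≤ Order.height (T.comap P.subtype) :=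
          (ENat.add_one_le_iff htop).mpr (Order.height_strictMono h (lt_top_iff_ne_top.mpr htop))
        calc f S + 1
            = (Order.height (S.comap P.subtype) + 1) + Order.height (S.map P.mkQ) := by
              simp only [hfdef]; ring
          _ ≤ Order.height (T.comap P.subtype) + Order.height (T.map P.mkQ) :=
              add_le_add h1 (Order.height_mono hm)
          _ = f T := rfl
    · by_cases htop : Order.height (S.map P.mkQ) = ⊤
      · have hT : Order.height (T.map P.mkQ) = ⊤ :=
          top_unique (htop ▸ Order.height_mono hm)
        simp [hfdef, hT, add_top]
      · have h1 : Order.height (S.map P.mkQ) + 1 ≤ Order.height (T.map P.mkQ) :=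
          (ENat.add_one_le_iff htop).mpr (Order.height_strictMono h (lt_top_iff_ne_top.mpr htop))
        calc f S + 1
            = Order.height (S.comap P.subtype) + (Order.height (S.map P.mkQ) + 1) := by
              simp only [hfdef]; ring
          _ ≤ Order.height (T.comap P.subtype) + Order.height (T.map P.mkQ) :=
              add_le_add (Order.height_mono hc) h1
          _ = f T := rfl
  rw [moduleLength_eq_iSup R M]
  refine iSup_le fun p => ?_
  calc (p.length : ℕ∞) ≤ f p.last := LTSeries.length_le_fun f hstep p
    _ ≤ moduleLength R P + moduleLength R (M ⧸ P) :=
        add_le_add (height_le_moduleLength _) (height_le_moduleLength _)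

lemma moduleLength_quotient_add_one_le {R M : Type u} [Ring R] [AddCommGroup M] [Module R M]
    (P : Submodule R M) (hP : P ≠ ⊥) :
    moduleLength R (M ⧸ P) + 1 ≤ moduleLength R M := by
  haveI : Nonempty (LTSeries (Submodule R (M ⧸ P))) := ⟨RelSeries.singleton _ ⊥⟩
  rw [moduleLength_eq_iSup R (M ⧸ P), ENat.iSup_add]
  refine iSup_le fun q => ?_
  have hcm : StrictMono (fun S : Submodule R (M ⧸ P) => S.comap P.mkQ) :=
    Submodule.comap_strictMono_of_surjective (Submodule.mkQ_surjective P)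
  set q' := q.map (fun S : Submodule R (M ⧸ P) => S.comap P.mkQ) hcm with hq'
  have hPle : P ≤ q'.head := by
    have : Submodule.comap P.mkQ ⊥ ≤ q'.head := by
      have hh : q'.head = Submodule.comap P.mkQ q.head := by rw [hq']; simp
      rw [hh]
      exact Submodule.comap_mono (bot_le : (⊥ : Submodule R (M ⧸ P)) ≤ q.head)
    simpa [Submodule.comap_bot, Submodule.ker_mkQ] using this
  have hbot : (⊥ : Submodule R M) < q'.head :=
    bot_lt_iff_ne_bot.mpr fun h => hP (le_bot_iff.mp (h ▸ hPle))
  have := length_le_moduleLength (q'.cons ⊥ hbot)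
  simp only [RelSeries.cons_length] at this
  have hq'len : q'.length = q.length := rfl
  rw [hq'len] at this
  exact_mod_cast this

end LengthInfra

section TensorInfra

open TensorProduct

lemma tensor_subsingleton_left {R M N : Type u} [CommRing R] [AddCommGroup M] [Module R M]
    [AddCommGroup N] [Module R N] [Subsingleton M] : Subsingleton (M ⊗[R] N) := by
  refine subsingleton_of_forall_eq 0 fun z => ?_
  induction z using TensorProduct.induction_on with
  | zero => rfl
  | tmul x n => rw [Subsingleton.elim x 0, TensorProduct.zero_tmul]
  | add a b ha hb => rw [ha, hb, add_zero]

/-- If every pure tensor `p ⊗ n` with `p ∈ P` vanishes, then `M ⊗ N ≃ (M/P) ⊗ N`. -/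
lemma tensor_quot_equiv {R M N : Type u} [CommRing R] [AddCommGroup M] [Module R M]
    [AddCommGroup N] [Module R N] (P : Submodule R M)
    (h : ∀ p ∈ P, ∀ n : N, (p ⊗ₜ[R] n : M ⊗[R] N) = 0) :
    Nonempty ((M ⊗[R] N) ≃ₗ[R] ((M ⧸ P) ⊗[R] N)) := by
  have hsurj : Function.Surjective (LinearMap.rTensor N P.mkQ) :=
    LinearMap.rTensor_surjective N (Submodule.mkQ_surjective P)
  have hzero : LinearMap.rTensor N P.subtype = 0 := by
    apply TensorProduct.ext'
    intro p n
    simpa using h p p.2 n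
  have hker : LinearMap.ker (LinearMap.rTensor N P.mkQ) = ⊥ := by
    rw [rTensor_mkQ N P, hzero, LinearMap.range_zero]
  exact ⟨LinearEquiv.ofBijective _ ⟨LinearMap.ker_eq_bot.mp hker, hsurj⟩⟩

lemma moduleLength_tensor_le_add {R M N : Type u} [CommRing R] [AddCommGroup M] [Module R M]
    [AddCommGroup N] [Module R N] (P : Submodule R M) :
    moduleLength R (M ⊗[R] N) ≤
      moduleLength R ((P : Type u) ⊗[R] N) + moduleLength R ((M ⧸ P) ⊗[R] N) := by
  set g := LinearMap.rTensor N P.mkQ with hg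
  have hsurj : Function.Surjective g :=
    LinearMap.rTensor_surjective N (Submodule.mkQ_surjective P)
  have h1 : moduleLength R (M ⊗[R] N) ≤
      moduleLength R (LinearMap.ker g) + moduleLength R ((M ⊗[R] N) ⧸ LinearMap.ker g) :=
    moduleLength_le_add (LinearMap.ker g)
  have e : ((M ⊗[R] N) ⧸ LinearMap.ker g) ≃ₗ[R] ((M ⧸ P) ⊗[R] N) :=
    g.quotKerEquivOfSurjective hsurj
  have h2 : moduleLength R (LinearMap.ker g) ≤ moduleLength R ((P : Type u) ⊗[R] N) := by
    have hkr : LinearMap.ker g = LinearMap.range (LinearMap.rTensor N P.subtype) :=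
      rTensor_mkQ N P
    rw [hkr]
    exact moduleLength_le_of_surjective (LinearMap.rTensor N P.subtype).rangeRestrict
      (LinearMap.surjective_rangeRestrict _)
  calc moduleLength R (M ⊗[R] N)
      ≤ moduleLength R (LinearMap.ker g) + moduleLength R ((M ⊗[R] N) ⧸ LinearMap.ker g) := h1
    _ ≤ moduleLength R ((P : Type u) ⊗[R] N) + moduleLength R ((M ⧸ P) ⊗[R] N) :=
        add_le_add h2 (le_of_eq (moduleLength_eq_of_equiv e))

end TensorInfra

section LocalInfra

open IsLocalRing TensorProduct

lemma exists_socle_elem {R M : Type u} [CommRing R] [IsLocalRing R] [AddCommGroup M]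
    [Module R M] (x : M) (hx : x ≠ 0) (j : ℕ)
    (hj : ∀ c ∈ maximalIdeal R ^ j, c • x = 0) :
    ∃ y : M, y ≠ 0 ∧ ∀ c ∈ maximalIdeal R, c • y = 0 := by
  induction j generalizing x with
  | zero =>
      exact absurd (by simpa using hj 1 (by simp [Ideal.one_eq_top])) hx
  | succ j ih =>
      by_cases h : ∀ c ∈ maximalIdeal R, c • x = 0
      · exact ⟨x, hx, h⟩
      · push_neg at h
        obtain ⟨c, hc, hcx⟩ := h
        refine ih (c • x) hcx fun d hd => ?_
        rw [smul_smul]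
        exact hj (d * c) (by rw [pow_succ]; exact Ideal.mul_mem_mul hd hc)

/-- Key induction: if `M` is `m`-torsion of length at most `n`, then
`len (M ⊗ N) ≤ n • len (N/mN)`. -/
lemma moduleLength_tensor_le_aux (R N : Type u) [CommRing R] [IsLocalRing R]
    [AddCommGroup N] [Module R N] :
    ∀ (n : ℕ) (M : Type u) [AddCommGroup M] [Module R M],
      (∀ x : M, ∃ j : ℕ, ∀ c ∈ maximalIdeal R ^ j, c • x = 0) →
      moduleLength R M ≤ (n : ℕ∞) →
      moduleLength R (M ⊗[R] N) ≤
        (n : ℕ∞) * moduleLength R (N ⧸ (maximalIdeal R • (⊤ : Submodule R N))) := by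
  intro n
  induction n with
  | zero =>
      intro M _ _ hM hlen
      haveI : Subsingleton M := subsingleton_of_moduleLength_le_zero (by simpa using hlen)
      haveI : Subsingleton (M ⊗[R] N) := tensor_subsingleton_left
      simp [moduleLength_eq_zero_of_subsingleton]
  | succ n ih =>
      intro M _ _ hM hlen
      by_cases hMsub : Subsingleton M
      · haveI : Subsingleton (M ⊗[R] N) := tensor_subsingleton_left
        simp [moduleLength_eq_zero_of_subsingleton]
      · have : Nontrivial M := not_subsingleton_iff_nontrivial.mp hMsub
        obtain ⟨x, hx⟩ := exists_ne (0 : M)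
        obtain ⟨j, hj⟩ := hM x
        obtain ⟨y, hy0, hy⟩ := exists_socle_elem x hx j hj
        set P : Submodule R M := Submodule.span R {y} with hPdef
        have hPbot : P ≠ ⊥ := by
          simpa [hPdef, Submodule.span_singleton_eq_bot] using hy0
        have hMq : ∀ z : M ⧸ P, ∃ j : ℕ, ∀ c ∈ maximalIdeal R ^ j, c • z = 0 := by
          intro z
          obtain ⟨w, rfl⟩ := Submodule.mkQ_surjective P z
          obtain ⟨i, hi⟩ := hM w
          exact ⟨i, fun c hc => by rw [← map_smul, hi c hc, map_zero]⟩
        have hq : moduleLength R (M ⧸ P) ≤ (n : ℕ∞) := by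
          have h1 := (moduleLength_quotient_add_one_le P hPbot).trans hlen
          have h2 : ((n : ℕ∞) + 1 : ℕ∞) = ((n + 1 : ℕ) : ℕ∞) := by push_cast; rfl
          rw [← h2] at h1
          exact (WithTop.add_le_add_iff_right (by simp : (1 : ℕ∞) ≠ ⊤)).mp h1
        have hMP := ih (M ⧸ P) hMq hq
        have hPN : moduleLength R ((P : Type u) ⊗[R] N) ≤
            moduleLength R (N ⧸ (maximalIdeal R • (⊤ : Submodule R N))) := by
          set y' : P := ⟨y, Submodule.mem_span_singleton_self y⟩ with hy'def
          set ψ : N →ₗ[R] ((P : Type u) ⊗[R] N) := TensorProduct.mk R P N y' with hψdef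
          have hker : maximalIdeal R • (⊤ : Submodule R N) ≤ LinearMap.ker ψ := by
            refine Submodule.smul_le.mpr fun r hr nn _ => ?_
            have hry' : r • y' = 0 := by
              apply Subtype.ext
              simpa using hy r hr
            show ψ (r • nn) = 0
            rw [hψdef]
            show y' ⊗ₜ[R] (r • nn) = 0
            rw [← TensorProduct.smul_tmul, hry', TensorProduct.zero_tmul]
          set φ := Submodule.liftQ _ ψ hker with hφdef
          have hφ : Function.Surjective φ := by
            intro z
            induction z using TensorProduct.induction_on with
            | zero => exact ⟨0, map_zero _⟩
            | tmul p nn =>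
                obtain ⟨r, hr⟩ := Submodule.mem_span_singleton.mp p.2
                refine ⟨Submodule.mkQ _ (r • nn), ?_⟩
                have : φ (Submodule.mkQ _ (r • nn)) = ψ (r • nn) := by
                  rw [hφdef]; simp
                rw [this, hψdef]
                show y' ⊗ₜ[R] (r • nn) = p ⊗ₜ[R] nn
                rw [← TensorProduct.smul_tmul]
                congr 1
                exact Subtype.ext (by simpa using hr)
            | add a b ha hb =>
                obtain ⟨za, hza⟩ := ha
                obtain ⟨zb, hzb⟩ := hb
                exact ⟨za + zb, by rw [map_add, hza, hzb]⟩
          exact moduleLength_le_of_surjective φ hφ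
        calc moduleLength R (M ⊗[R] N)
            ≤ moduleLength R ((P : Type u) ⊗[R] N) + moduleLength R ((M ⧸ P) ⊗[R] N) :=
              moduleLength_tensor_le_add P
          _ ≤ moduleLength R (N ⧸ (maximalIdeal R • (⊤ : Submodule R N))) +
              (n : ℕ∞) * moduleLength R (N ⧸ (maximalIdeal R • (⊤ : Submodule R N))) :=
              add_le_add hPN hMP
          _ = ((n + 1 : ℕ) : ℕ∞) *
              moduleLength R (N ⧸ (maximalIdeal R • (⊤ : Submodule R N))) := by
              push_cast; ring

lemma moduleLength_tensor_le_mul (R M N : Type u) [CommRing R] [IsLocalRing R]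
    [AddCommGroup M] [Module R M] [AddCommGroup N] [Module R N]
    (hM : ∀ x : M, ∃ j : ℕ, ∀ c ∈ maximalIdeal R ^ j, c • x = 0) :
    moduleLength R (M ⊗[R] N) ≤
      moduleLength R M * moduleLength R (N ⧸ (maximalIdeal R • (⊤ : Submodule R N))) := by
  rcases eq_or_ne (moduleLength R M) ⊤ with htop | hfin
  · rcases eq_or_ne (moduleLength R (N ⧸ (maximalIdeal R • (⊤ : Submodule R N)))) 0 with h0 | h0
    · haveI : Subsingleton (N ⧸ (maximalIdeal R • (⊤ : Submodule R N))) :=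
        subsingleton_of_moduleLength_le_zero h0.le
      have hN : maximalIdeal R • (⊤ : Submodule R N) = ⊤ :=
        Submodule.Quotient.subsingleton_iff.mp ‹_›
      have hNj : ∀ j : ℕ, (maximalIdeal R ^ j) • (⊤ : Submodule R N) = ⊤ := by
        intro j
        induction j with
        | zero => simp [Ideal.one_eq_top]
        | succ j ihj =>
            rw [pow_succ, ← Ideal.smul_eq_mul, Submodule.smul_assoc, hN, ihj]
      haveI : Subsingleton (M ⊗[R] N) := by
        refine subsingleton_of_forall_eq 0 fun z => ?_
        induction z using TensorProduct.induction_on with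
        | zero => rfl
        | tmul xx nn =>
            obtain ⟨j, hj⟩ := hM xx
            have hn : nn ∈ (maximalIdeal R ^ j) • (⊤ : Submodule R N) := by
              rw [hNj j]; trivial
            refine Submodule.smul_induction_on (p := fun w => xx ⊗ₜ[R] w = 0) hn ?_ ?_
            · intro r hr nn' _
              rw [← TensorProduct.smul_tmul, hj r hr, TensorProduct.zero_tmul]
            · intro a b ha hb
              rw [TensorProduct.tmul_add, ha, hb, add_zero]
        | add a b ha hb => rw [ha, hb, add_zero]
      rw [moduleLength_eq_zero_of_subsingleton]
      exact zero_le
    · rw [htop, ENat.top_mul h0]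
      exact le_top
  · obtain ⟨n, hn⟩ := WithTop.ne_top_iff_exists.mp hfin
    rw [← hn]
    exact moduleLength_tensor_le_aux R N n M hM (le_of_eq hn.symm)

end LocalInfra

/-- Let `R` be a commutative noetherian local ring with maximal ideal `m`, let `A` be an
artinian `R`-module and `L` an `m`-torsion `R`-module, and fix `t ≥ 0` with
`m^t A = m^(t+1) A`.  Then `len_R(A ⊗_R L) ≤ len_R(A / m^t A) · β^R_0(L)` and
`len_R(A ⊗_R L) ≤ β^R_0(A) · len_R(L / m^t L)`, where `β^R_0(X) = len_R(X / m X)`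
(with the convention `0 · ∞ = 0`, valid in `ℕ∞`). -/
theorem length_tensor_le
    (R : Type u) [CommRing R] [IsNoetherianRing R] [IsLocalRing R]
    (A L : Type u) [AddCommGroup A] [Module R A] [AddCommGroup L] [Module R L]
    [IsArtinian R A]
    (hL : ∀ x : L, ∃ j : ℕ, ∀ a ∈ maximalIdeal R ^ j, a • x = 0)
    (t : ℕ) (ht : maximalIdeal R ^ t • (⊤ : Submodule R A) =
      maximalIdeal R ^ (t + 1) • (⊤ : Submodule R A)) :
    moduleLength R (A ⊗[R] L) ≤
      moduleLength R (A ⧸ (maximalIdeal R ^ t • (⊤ : Submodule R A))) *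
        moduleLength R (L ⧸ (maximalIdeal R • (⊤ : Submodule R L))) ∧
    moduleLength R (A ⊗[R] L) ≤
      moduleLength R (A ⧸ (maximalIdeal R • (⊤ : Submodule R A))) *
        moduleLength R (L ⧸ (maximalIdeal R ^ t • (⊤ : Submodule R L))) := by
  classical
  set m := maximalIdeal R with hm
  -- stability of `m ^ t • A`
  have hstab : ∀ j : ℕ, m ^ (t + j) • (⊤ : Submodule R A) = m ^ t • (⊤ : Submodule R A) := by
    intro j
    induction j with
    | zero => rfl
    | succ j ihj =>
        calc m ^ (t + (j + 1)) • (⊤ : Submodule R A)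
            = (m * m ^ (t + j)) • (⊤ : Submodule R A) := by
              rw [show t + (j + 1) = (t + j) + 1 from rfl, pow_succ, mul_comm]
          _ = m • (m ^ (t + j) • (⊤ : Submodule R A)) := by
              rw [← Ideal.smul_eq_mul, Submodule.smul_assoc]
          _ = m • (m ^ t • (⊤ : Submodule R A)) := by rw [ihj]
          _ = (m * m ^ t) • (⊤ : Submodule R A) := by
              rw [← Ideal.smul_eq_mul, Submodule.smul_assoc]
          _ = m ^ (t + 1) • (⊤ : Submodule R A) := by rw [pow_succ']
          _ = m ^ t • (⊤ : Submodule R A) := ht.symm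
  -- pure tensors from `m^t A` vanish in `A ⊗ L`
  have hAker : ∀ p ∈ m ^ t • (⊤ : Submodule R A), ∀ x : L, (p ⊗ₜ[R] x : A ⊗[R] L) = 0 := by
    intro p hp x
    obtain ⟨j, hj⟩ := hL x
    have hp' : p ∈ (m ^ j) • (m ^ t • (⊤ : Submodule R A)) := by
      rw [← Submodule.smul_assoc, Ideal.smul_eq_mul, ← pow_add]
      rw [show j + t = t + j from add_comm j t, hstab j]
      exact hp
    refine Submodule.smul_induction_on (p := fun w => (w ⊗ₜ[R] x : A ⊗[R] L) = 0) hp' ?_ ?_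
    · intro r hr a _
      rw [TensorProduct.smul_tmul, hj r hr, TensorProduct.tmul_zero]
    · intro a b ha hb
      rw [TensorProduct.add_tmul, ha, hb, add_zero]
  obtain ⟨e1⟩ := tensor_quot_equiv (m ^ t • (⊤ : Submodule R A)) hAker
  set Abar := A ⧸ (m ^ t • (⊤ : Submodule R A)) with hAbar
  -- `Abar` is `m`-torsion (killed by `m ^ t`)
  have hAbarTor : ∀ x : Abar, ∃ j : ℕ, ∀ c ∈ m ^ j, c • x = 0 := by
    intro x
    obtain ⟨a, rfl⟩ := Submodule.mkQ_surjective _ x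
    refine ⟨t, fun c hc => ?_⟩
    rw [← map_smul]
    exact (Submodule.Quotient.mk_eq_zero _).mpr
      (Submodule.smul_mem_smul hc Submodule.mem_top)
  constructor
  · calc moduleLength R (A ⊗[R] L) = moduleLength R (Abar ⊗[R] L) :=
          moduleLength_eq_of_equiv e1
      _ ≤ moduleLength R Abar * moduleLength R (L ⧸ (m • (⊤ : Submodule R L))) :=
          moduleLength_tensor_le_mul R Abar L hAbarTor
  · rcases Nat.eq_zero_or_pos t with ht0 | htpos
    · -- `t = 0`: `Abar = 0`, so everything vanishes
      haveI : Subsingleton Abar := by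
        rw [hAbar, ht0]
        exact Submodule.Quotient.subsingleton_iff.mpr
          (by rw [pow_zero, Ideal.one_eq_top, Submodule.top_smul])
      haveI : Subsingleton (Abar ⊗[R] L) := tensor_subsingleton_left
      rw [moduleLength_eq_of_equiv e1, moduleLength_eq_zero_of_subsingleton]
      exact zero_le
    · set Lbar := L ⧸ (m ^ t • (⊤ : Submodule R L)) with hLbar
      have hLker : ∀ p ∈ m ^ t • (⊤ : Submodule R L), ∀ x : Abar,
          (p ⊗ₜ[R] x : L ⊗[R] Abar) = 0 := by
        intro p hp x
        refine Submodule.smul_induction_on (p := fun w => (w ⊗ₜ[R] x : L ⊗[R] Abar) = 0)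
          hp ?_ ?_
        · intro r hr l _
          have hrx : r • x = 0 := by
            obtain ⟨a, rfl⟩ := Submodule.mkQ_surjective _ x
            rw [← map_smul]
            exact (Submodule.Quotient.mk_eq_zero _).mpr
              (Submodule.smul_mem_smul hr Submodule.mem_top)
          rw [TensorProduct.smul_tmul, hrx, TensorProduct.tmul_zero]
        · intro a b ha hb
          rw [TensorProduct.add_tmul, ha, hb, add_zero]
      obtain ⟨e2⟩ := tensor_quot_equiv (m ^ t • (⊤ : Submodule R L)) hLker
      have hLbarTor : ∀ x : Lbar, ∃ j : ℕ, ∀ c ∈ m ^ j, c • x = 0 := by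
        intro x
        obtain ⟨l, rfl⟩ := Submodule.mkQ_surjective _ x
        refine ⟨t, fun c hc => ?_⟩
        rw [← map_smul]
        exact (Submodule.Quotient.mk_eq_zero _).mpr
          (Submodule.smul_mem_smul hc Submodule.mem_top)
      have e3 : (A ⊗[R] L) ≃ₗ[R] ((Lbar : Type u) ⊗[R] Abar) :=
        e1.trans ((TensorProduct.comm R Abar L).trans e2)
      -- `Abar / m Abar ≃ A / m A`
      have hle : m ^ t • (⊤ : Submodule R A) ≤ m • (⊤ : Submodule R A) :=
        Submodule.smul_mono_left (Ideal.pow_le_self (Nat.pos_iff_ne_zero.mp htpos))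
      have hmap : Submodule.map (m ^ t • (⊤ : Submodule R A)).mkQ (m • (⊤ : Submodule R A))
          = m • (⊤ : Submodule R Abar) := by
        rw [Submodule.map_smul'', Submodule.map_top, Submodule.range_mkQ]
      have e4 : (Abar ⧸ (m • (⊤ : Submodule R Abar))) ≃ₗ[R]
          (A ⧸ (m • (⊤ : Submodule R A))) :=
        (Submodule.quotEquivOfEq _ _ hmap.symm).trans
          (Submodule.quotientQuotientEquivQuotient _ _ hle)
      calc moduleLength R (A ⊗[R] L)
          = moduleLength R ((Lbar : Type u) ⊗[R] Abar) := moduleLength_eq_of_equiv e3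
        _ ≤ moduleLength R Lbar * moduleLength R (Abar ⧸ (m • (⊤ : Submodule R Abar))) :=
            moduleLength_tensor_le_mul R Lbar Abar hLbarTor
        _ = moduleLength R (A ⧸ (m • (⊤ : Submodule R A))) * moduleLength R Lbar := by
            rw [moduleLength_eq_of_equiv e4, mul_comm]
end

section
/- Let R be a commutative noetherian local ring with maximal ideal m. Let A be an artinian R-module and let L be an m-torsion R-module. Then A ⊗_R L = 0 if and only if A = mA or L = mL. -/
/-!
Common definitions: `Ext`/`Tor` as objects of `ModuleCat R`, mini-max modules,
injective hulls of the residue field, Matlis biduality, module length, and the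
`m`-adic completion of a local ring.
-/

open CategoryTheory IsLocalRing TensorProduct

universe u

section Aux
variable (R : Type u) [CommRing R] [IsNoetherianRing R] [IsLocalRing R]

/-- Every element of an artinian module over a noetherian local ring is killed
by a power of the maximal ideal. -/
lemma artinian_torsion (A : Type u) [AddCommGroup A] [Module R A] [IsArtinian R A] (a : A) :
    ∃ j : ℕ, ∀ r ∈ maximalIdeal R ^ j, r • a = 0 := by
  set M : Submodule R A := Submodule.span R {a} with hM
  have hMfg : M.FG := ⟨{a}, by simp [hM]⟩
  haveI : IsNoetherian R M := isNoetherian_of_fg_of_noetherian M hMfg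
  -- the descending chain `m^n • M` stabilizes
  obtain ⟨B, ⟨N, hBN'⟩, hmin⟩ := (wellFounded_lt (α := Submodule R A)).has_min
    (Set.range fun n : ℕ => (maximalIdeal R ^ n) • M) ⟨_, ⟨0, rfl⟩⟩
  have hBN : (maximalIdeal R ^ N) • M = B := hBN'
  have hstep : (maximalIdeal R ^ (N + 1)) • M = B := by
    have hle : (maximalIdeal R ^ (N + 1)) • M ≤ B := by
      rw [← hBN, pow_succ, mul_comm, ← smul_eq_mul, Submodule.smul_assoc]
      exact Submodule.smul_le.2 fun r hr n hn => Submodule.smul_mem _ r hn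
    rcases lt_or_eq_of_le hle with h | h
    · exact absurd h (hmin _ ⟨N + 1, rfl⟩)
    · exact h
  -- `B` is finitely generated
  have hBM : B ≤ M := by
    rw [← hBN]
    exact Submodule.smul_le.2 fun r hr n hn => Submodule.smul_mem _ r hn
  have hBfg : B.FG := by
    have := (IsNoetherian.noetherian (B.comap M.subtype)).map M.subtype
    rwa [Submodule.map_comap_eq_self (by rw [Submodule.range_subtype]; exact hBM)] at this
  -- Nakayama
  have hB : B = ⊥ := by
    apply Submodule.eq_bot_of_le_smul_of_le_jacobson_bot (maximalIdeal R) B hBfg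
    · conv_lhs => rw [← hstep]
      rw [pow_succ, mul_comm, ← smul_eq_mul, Submodule.smul_assoc, hBN]
    · exact le_of_eq (IsLocalRing.jacobson_eq_maximalIdeal ⊥ bot_ne_top).symm
  refine ⟨N, fun r hr => ?_⟩
  have : r • a ∈ B := by
    rw [← hBN]
    exact Submodule.smul_mem_smul hr (Submodule.mem_span_singleton_self a)
  rw [hB] at this
  exact this

/-- If `M = mM` and every element of `L` is killed by a power of `m`, then every
simple tensor `x ⊗ y` vanishes. -/
lemma tmul_eq_zero (M L : Type u) [AddCommGroup M] [Module R M] [AddCommGroup L] [Module R L]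
    (hM : maximalIdeal R • (⊤ : Submodule R M) = ⊤)
    (hL : ∀ x : L, ∃ j : ℕ, ∀ a ∈ maximalIdeal R ^ j, a • x = 0)
    (x : M) (y : L) : x ⊗ₜ[R] y = 0 := by
  obtain ⟨j, hj⟩ := hL y
  have hpow : ∀ n : ℕ, (maximalIdeal R ^ n) • (⊤ : Submodule R M) = ⊤ := by
    intro n
    induction n with
    | zero => simp
    | succ n ih => rw [pow_succ, mul_comm, ← smul_eq_mul, Submodule.smul_assoc, ih, hM]
  have hx : x ∈ (maximalIdeal R ^ j) • (⊤ : Submodule R M) := by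
    rw [hpow j]; trivial
  refine Submodule.smul_induction_on hx ?_ ?_
  · intro r hr m _
    rw [smul_tmul, hj r hr, tmul_zero]
  · intro m n hm hn
    rw [add_tmul, hm, hn, add_zero]

/-- If `m • ⊤ ≠ ⊤` then there is an `R`-linear map to the residue field not
vanishing somewhere. -/
lemma exists_map_to_residue (M : Type u) [AddCommGroup M] [Module R M]
    (h : maximalIdeal R • (⊤ : Submodule R M) ≠ ⊤) :
    ∃ (f : M →ₗ[R] (R ⧸ maximalIdeal R)) (x : M), f x ≠ 0 := by
  haveI : Nontrivial (M ⧸ (maximalIdeal R • (⊤ : Submodule R M))) :=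
    Submodule.Quotient.nontrivial_iff.2 h
  haveI : Module.Projective (R ⧸ maximalIdeal R)
      (M ⧸ (maximalIdeal R • (⊤ : Submodule R M))) := by
    letI : Field (R ⧸ maximalIdeal R) := Ideal.Quotient.field _
    exact Module.Projective.of_free
  obtain ⟨v, hv⟩ := exists_ne (0 : M ⧸ (maximalIdeal R • (⊤ : Submodule R M)))
  have := (Module.forall_dual_apply_eq_zero_iff (R ⧸ maximalIdeal R) v).not.2 hv
  push_neg at this
  obtain ⟨φ, hφ⟩ := this
  obtain ⟨x, rfl⟩ := Submodule.Quotient.mk_surjective _ v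
  refine ⟨{ toFun := fun y => φ (Submodule.Quotient.mk y)
            map_add' := fun y z => by rw [Submodule.Quotient.mk_add, map_add]
            map_smul' := fun r y => by
              rw [RingHom.id_apply, ← Module.Quotient.mk_smul_mk, map_smul,
                ← Ideal.Quotient.algebraMap_eq, algebraMap_smul] }, x, hφ⟩

/-- Symmetric version: if `L = mL` and every element of `M` is killed by a power
of `m`, then simple tensors vanish. -/
lemma tmul_eq_zero' (M L : Type u) [AddCommGroup M] [Module R M] [AddCommGroup L] [Module R L]
    (hLtop : maximalIdeal R • (⊤ : Submodule R L) = ⊤)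
    (hM : ∀ x : M, ∃ j : ℕ, ∀ a ∈ maximalIdeal R ^ j, a • x = 0)
    (x : M) (y : L) : x ⊗ₜ[R] y = 0 := by
  obtain ⟨j, hj⟩ := hM x
  have hpow : ∀ n : ℕ, (maximalIdeal R ^ n) • (⊤ : Submodule R L) = ⊤ := by
    intro n
    induction n with
    | zero => simp
    | succ n ih => rw [pow_succ, mul_comm, ← smul_eq_mul, Submodule.smul_assoc, ih, hLtop]
  have hy : y ∈ (maximalIdeal R ^ j) • (⊤ : Submodule R L) := by
    rw [hpow j]; trivial
  refine Submodule.smul_induction_on hy ?_ ?_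
  · intro r hr m _
    rw [← smul_tmul, hj r hr, zero_tmul]
  · intro m n hm hn
    rw [tmul_add, hm, hn, add_zero]

end Aux

/-- Let `R` be a commutative noetherian local ring with maximal ideal `m`, let `A` be an
artinian `R`-module and `L` an `m`-torsion `R`-module.  Then `A ⊗_R L = 0` if and only
if `A = mA` or `L = mL`. -/
theorem tensor_eq_zero_iff
    (R : Type u) [CommRing R] [IsNoetherianRing R] [IsLocalRing R]
    (A L : Type u) [AddCommGroup A] [Module R A] [AddCommGroup L] [Module R L]
    [IsArtinian R A]
    (hL : ∀ x : L, ∃ j : ℕ, ∀ a ∈ maximalIdeal R ^ j, a • x = 0) :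
    Subsingleton (A ⊗[R] L) ↔
      maximalIdeal R • (⊤ : Submodule R A) = ⊤ ∨
        maximalIdeal R • (⊤ : Submodule R L) = ⊤ := by
  constructor
  · intro hsub
    by_contra hcon
    push_neg at hcon
    obtain ⟨hA, hL'⟩ := hcon
    obtain ⟨f, a, hfa⟩ := exists_map_to_residue R A hA
    obtain ⟨g, x, hgx⟩ := exists_map_to_residue R L hL'
    have h0 : (a ⊗ₜ[R] x : A ⊗[R] L) = 0 := Subsingleton.elim _ _
    have h1 := congrArg ((LinearMap.mul' R (R ⧸ maximalIdeal R)).comp (TensorProduct.map f g)) h0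
    rw [map_zero, LinearMap.comp_apply, TensorProduct.map_tmul, LinearMap.mul'_apply] at h1
    exact mul_ne_zero hfa hgx h1
  · rintro (h | h)
    · have hz : ∀ z : A ⊗[R] L, z = 0 := fun z =>
        z.induction_on rfl (fun a x => tmul_eq_zero R A L h hL a x)
          (fun u v hu hv => by rw [hu, hv, add_zero])
      exact ⟨fun z w => by rw [hz z, hz w]⟩
    · have hz : ∀ z : A ⊗[R] L, z = 0 := fun z =>
        z.induction_on rfl
          (fun a x => tmul_eq_zero' R A L h (fun y => artinian_torsion R A y) a x)
          (fun u v hu hv => by rw [hu, hv, add_zero])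
      exact ⟨fun z w => by rw [hz z, hz w]⟩
end
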